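/- Let b : Fin N → Bool with an even number of positions where b is true, and define σ : Fin N → {+1,−1} by σ(j) = (−1)^{#\{i < j : b i = true\}}. Let b' be obtained from b by a cyclic rotation. Then the signed sum d(ε, b) = Σ_{j : b j = false} σ(j)·ε j satisfies |d(ε, b)| = |d(ε', b')| where ε' is the corresponding rotation of ε. In other words, the absolute value of the defect is independent of the choice of starting semiarc on the cycle. -/

import Mathlib

/-- A twisted intersection coloring mod `n` for cyclic move data `(ε, b)`:
`C : Fin (N+1) → ZMod n × ℤˣ` is closed (`C 0 = C N`) and follows the moves:
at a crossing position (`b j = false`) the first coordinate changes by `ε j`,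
at a bar position (`b j = true`) the value `(a,e)` becomes `(-a,-e)`. -/
def IsColoring (n N : ℕ) (ε : Fin N → ℤ) (b : Fin N → Bool)
    (C : Fin (N + 1) → ZMod n × ℤˣ) : Prop :=
  C 0 = C (Fin.last N) ∧
  ∀ j : Fin N, C j.succ =
    if b j then (-(C j.castSucc).1, -(C j.castSucc).2)
    else ((C j.castSucc).1 + (ε j : ZMod n), (C j.castSucc).2)

/-- The sign `σ(j) = (-1)^{#{i < j : b i = true}}`. -/
def sgn (N : ℕ) (b : Fin N → Bool) (j : Fin N) : ℤ :=
  (-1) ^ (Finset.univ.filter (fun i : Fin N => i < j ∧ b i = true)).card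

/-- The signed sum (defect) `d = Σ_{j : b j = false} σ(j)·ε j`. -/
def defect (N : ℕ) (ε : Fin N → ℤ) (b : Fin N → Bool) : ℤ :=
  ∑ j ∈ Finset.univ.filter (fun j : Fin N => b j = false), sgn N b j * ε j

/-- The number of bar positions. -/
def numBars (N : ℕ) (b : Fin N → Bool) : ℕ :=
  (Finset.univ.filter (fun j : Fin N => b j = true)).card

open Finset

lemma fin_castSucc_add_one {M : ℕ} (m : Fin M) :
    (m.castSucc : Fin (M+1)) + 1 = m.succ := by
  apply Fin.ext
  rw [Fin.val_add_one]
  have : m.castSucc ≠ Fin.last M := (Fin.castSucc_lt_last m).ne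
  simp [this]

lemma count_rot {M : ℕ} (b b' : Fin (M+1) → Bool) (hb' : ∀ j, b' j = b (j+1)) (i : Fin M) :
    (univ.filter fun k : Fin (M+1) => k < i.succ ∧ b k = true).card
      = (if b 0 = true then 1 else 0)
        + (univ.filter fun k : Fin (M+1) => k < i.castSucc ∧ b' k = true).card := by
  rw [Finset.card_filter, Finset.card_filter, Fin.sum_univ_succ, Fin.sum_univ_castSucc]
  have hlast : ¬ (Fin.last M < i.castSucc) := not_lt.mpr (Fin.le_last _)
  simp only [hb', fin_castSucc_add_one, Fin.succ_lt_succ_iff, Fin.castSucc_lt_castSucc_iff,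
    Fin.succ_pos, true_and, hlast, false_and, if_false, add_zero]

lemma count_rot_last {M : ℕ} (b b' : Fin (M+1) → Bool) (hb' : ∀ j, b' j = b (j+1)) :
    (if b 0 = true then 1 else 0) +
      (univ.filter fun k : Fin (M+1) => k < Fin.last M ∧ b' k = true).card
      = numBars (M+1) b := by
  rw [numBars, Finset.card_filter, Finset.card_filter,
    Fin.sum_univ_castSucc (f := fun k => if k < Fin.last M ∧ b' k = true then (1:ℕ) else 0),
    Fin.sum_univ_succ (f := fun k => if b k = true then (1:ℕ) else 0)]
  have h1 : ∀ m : Fin M, m.castSucc < Fin.last M := Fin.castSucc_lt_last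
  simp only [hb', fin_castSucc_add_one, h1, true_and, lt_irrefl, false_and, if_false, add_zero]

lemma sgn_zero {M : ℕ} (b : Fin (M+1) → Bool) : sgn (M+1) b 0 = 1 := by
  simp [sgn, Fin.not_lt_zero]

lemma sgn_rot {M : ℕ} (b b' : Fin (M+1) → Bool) (hb' : ∀ j, b' j = b (j+1)) (i : Fin M) :
    sgn (M+1) b' i.castSucc = (-1) ^ (if b 0 = true then 1 else 0) * sgn (M+1) b i.succ := by
  rw [sgn, sgn, count_rot b b' hb' i, pow_add, ← mul_assoc, ← pow_add, ← two_mul, pow_mul]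
  norm_num

lemma sgn_rot_last {M : ℕ} (b b' : Fin (M+1) → Bool) (hb' : ∀ j, b' j = b (j+1))
    (hb : Even (numBars (M+1) b)) :
    sgn (M+1) b' (Fin.last M) = (-1) ^ (if b 0 = true then 1 else 0) := by
  have h := count_rot_last b b' hb'
  rw [sgn]
  set c := (univ.filter fun k : Fin (M+1) => k < Fin.last M ∧ b' k = true).card with hc
  by_cases h0 : b 0 = true
  · rw [if_pos h0] at h ⊢
    have h1 : (-1:ℤ) ^ (1 + c) = 1 := by rw [h]; exact hb.neg_one_pow
    rw [pow_add, pow_one] at h1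
    rw [pow_one]
    linarith
  · rw [if_neg h0] at h ⊢
    rw [zero_add] at h
    rw [pow_zero, h]
    exact hb.neg_one_pow

lemma numBars_rot {M : ℕ} (b b' : Fin (M+1) → Bool) (r : Fin (M+1))
    (hb' : ∀ j, b' j = b (j + r)) : numBars (M+1) b' = numBars (M+1) b := by
  rw [numBars, numBars, Finset.card_filter, Finset.card_filter]
  exact Fintype.sum_equiv (Equiv.addRight r) _ _ (fun j => by simp [hb' j]; rfl)

lemma defect_rot_one {M : ℕ} (ε : Fin (M+1) → ℤ) (b : Fin (M+1) → Bool)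
    (hb : Even (numBars (M+1) b))
    (ε' : Fin (M+1) → ℤ) (b' : Fin (M+1) → Bool)
    (hε' : ∀ j, ε' j = ε (j+1)) (hb' : ∀ j, b' j = b (j+1)) :
    defect (M+1) ε' b' = (-1) ^ (if b 0 = true then 1 else 0) * defect (M+1) ε b := by
  rw [defect, defect, Finset.sum_filter, Finset.sum_filter, Fin.sum_univ_castSucc,
    Fin.sum_univ_succ]
  simp only [hb', hε', fin_castSucc_add_one, Fin.last_add_one, sgn_rot b b' hb',
    sgn_rot_last b b' hb' hb, sgn_zero, one_mul, mul_ite, mul_zero, mul_assoc, mul_add,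
    Finset.mul_sum]
  exact add_comm _ _

open Fin.NatCast Fin.CommRing in
lemma defect_rot_nat {M : ℕ} : ∀ (k : ℕ) (ε : Fin (M+1) → ℤ) (b : Fin (M+1) → Bool),
    Even (numBars (M+1) b) → ∀ (ε' : Fin (M+1) → ℤ) (b' : Fin (M+1) → Bool),
    (∀ j, ε' j = ε (j + (k : Fin (M+1)))) → (∀ j, b' j = b (j + (k : Fin (M+1)))) →
    (defect (M+1) ε' b').natAbs = (defect (M+1) ε b).natAbs := by
  intro k
  induction k with
  | zero =>
    intro ε b hb ε' b' hε' hb'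
    have h1 : ε' = ε := funext fun j => by simpa using hε' j
    have h2 : b' = b := funext fun j => by simpa using hb' j
    rw [h1, h2]
  | succ k ih =>
    intro ε b hb ε' b' hε' hb'
    have hbb : Even (numBars (M+1) (fun j => b (j + (k : Fin (M+1))))) := by
      rw [numBars_rot b (fun j => b (j + (k : Fin (M+1)))) (k : Fin (M+1)) (fun _ => rfl)]
      exact hb
    have key : ∀ j : Fin (M+1), j + ((k+1 : ℕ) : Fin (M+1)) = (j + 1) + (k : Fin (M+1)) := by
      intro j
      push_cast
      ring
    have h1 : ∀ j, ε' j = ε ((j + 1) + (k : Fin (M+1))) := fun j => by rw [hε' j, key j]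
    have h2 : ∀ j, b' j = b ((j + 1) + (k : Fin (M+1))) := fun j => by rw [hb' j, key j]
    rw [defect_rot_one (fun j => ε (j + (k : Fin (M+1)))) (fun j => b (j + (k : Fin (M+1))))
      hbb ε' b' h1 h2, Int.natAbs_mul]
    have hpow : ∀ n : ℕ, ((-1:ℤ) ^ n).natAbs = 1 := fun n => by
      rw [Int.natAbs_pow]; simp
    rw [hpow, one_mul]
    exact ih ε b hb _ _ (fun j => rfl) (fun j => rfl)

open Fin.NatCast Fin.CommRing in
theorem stmt_13 (N : ℕ) (ε : Fin N → ℤ) (b : Fin N → Bool)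
    (hb : Even (numBars N b)) (r : Fin N)
    (ε' : Fin N → ℤ) (b' : Fin N → Bool)
    (hε' : ∀ j, ε' j = ε (j + r)) (hb' : ∀ j, b' j = b (j + r)) :
    (defect N ε b).natAbs = (defect N ε' b').natAbs := by
  cases N with
  | zero => exact r.elim0
  | succ M =>
    exact (defect_rot_nat r.val ε b hb ε' b'
      (fun j => by rw [hε' j, Fin.cast_val_eq_self])
      (fun j => by rw [hb' j, Fin.cast_val_eq_self])).symm
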